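/- arXiv:2212.08752 — 4 statements merged into one kernel-verified Lean document; each statement's English description precedes it below -/
import Mathlib

section
/- For every real number β, the integral over [0, π] of log((sin β · cos θ)² + (cos β · sin θ)²) dθ is at most -π·log 2. -/
open Real MeasureTheory Set

lemma II_log_01 : IntervalIntegrable Real.log volume 0 1 := by
  have h : IntervalIntegrable (fun x : ℝ => -Real.log x) volume 0 1 := by
    apply intervalIntegral.intervalIntegrable_deriv_of_nonneg (g := fun x : ℝ => x - x * Real.log x)
    · exact (continuous_id.sub Real.continuous_mul_log).continuousOn
    · intro x hx
      rw [show min (0:ℝ) 1 = 0 by norm_num, show max (0:ℝ) 1 = 1 by norm_num] at hx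
      have h1 := Real.hasDerivAt_mul_log (ne_of_gt hx.1)
      have h2 : HasDerivAt (fun x : ℝ => x - x * Real.log x) (1 - (Real.log x + 1)) x :=
        (hasDerivAt_id x).sub h1
      convert h2 using 1
      ring
    · intro x hx
      rw [show min (0:ℝ) 1 = 0 by norm_num, show max (0:ℝ) 1 = 1 by norm_num] at hx
      have : Real.log x ≤ 0 := Real.log_nonpos hx.1.le hx.2.le
      linarith
  have h2 := h.neg
  have e : (-fun x : ℝ => -Real.log x) = Real.log := by funext x; simp
  rwa [e] at h2

lemma II_log_half : IntervalIntegrable Real.log volume 0 (π/2) := by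
  refine II_log_01.trans (intervalIntegral.intervalIntegrable_log ?_)
  intro h
  rw [Set.mem_uIcc] at h
  have := Real.pi_gt_three
  rcases h with ⟨h1, _⟩ | ⟨h1, _⟩ <;> linarith

lemma II_logsinsq_half :
    IntervalIntegrable (fun x => Real.log (Real.sin x ^ 2)) volume 0 (π/2) := by
  have hg : IntervalIntegrable (fun x : ℝ => 2 * (Real.log (π/2) - Real.log x))
      volume 0 (π/2) := (intervalIntegrable_const.sub II_log_half).const_mul 2
  apply hg.mono_fun
  · exact (Real.measurable_log.comp (continuous_sin.pow 2).measurable).aestronglyMeasurable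
  · rw [Set.uIoc_of_le (by positivity : (0:ℝ) ≤ π/2)]
    filter_upwards [ae_restrict_mem measurableSet_Ioc] with x hx
    have hpi := Real.pi_pos
    have hsx : 0 < Real.sin x := Real.sin_pos_of_pos_of_lt_pi hx.1 (by linarith [hx.2])
    have hle : 2 / π * x ≤ Real.sin x := Real.mul_le_sin hx.1.le hx.2
    have h1 : Real.log (Real.sin x ^ 2) = 2 * Real.log (Real.sin x) := by
      rw [Real.log_pow]; push_cast; ring
    have h2 : Real.log (Real.sin x) ≤ 0 := Real.log_nonpos hsx.le (Real.sin_le_one x)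
    have h3 : Real.log x - Real.log (π/2) ≤ Real.log (Real.sin x) := by
      have hl : Real.log (2 / π * x) ≤ Real.log (Real.sin x) :=
        Real.log_le_log (mul_pos (by positivity) hx.1) hle
      rw [Real.log_mul (by positivity) hx.1.ne', Real.log_div two_ne_zero Real.pi_ne_zero]
        at hl
      rw [Real.log_div Real.pi_ne_zero two_ne_zero]
      linarith
    have h4 : 0 ≤ Real.log (π/2) - Real.log x := by linarith
    rw [Real.norm_eq_abs, Real.norm_eq_abs, h1, abs_of_nonpos (by linarith),
      abs_of_nonneg (by linarith)]
    linarith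

lemma II_logsinsq_pi :
    IntervalIntegrable (fun x => Real.log (Real.sin x ^ 2)) volume 0 π := by
  refine II_logsinsq_half.trans ?_
  have h := (II_logsinsq_half.comp_sub_left π).symm
  rw [sub_zero, show π - π/2 = π/2 by ring] at h
  have e : (fun x => Real.log (Real.sin (π - x) ^ 2))
      = fun x => Real.log (Real.sin x ^ 2) := by
    funext x; rw [Real.sin_pi_sub]
  rwa [e] at h

lemma II_logcossq_half :
    IntervalIntegrable (fun x => Real.log (Real.cos x ^ 2)) volume 0 (π/2) := by
  have h := (II_logsinsq_half.comp_sub_left (π/2)).symm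
  rw [sub_zero, sub_self] at h
  have e : (fun x => Real.log (Real.sin (π/2 - x) ^ 2))
      = fun x => Real.log (Real.cos x ^ 2) := by
    funext x; rw [Real.sin_pi_div_two_sub]
  rwa [e] at h

lemma II_logcossq_pi :
    IntervalIntegrable (fun x => Real.log (Real.cos x ^ 2)) volume 0 π := by
  refine II_logcossq_half.trans ?_
  have h := (II_logcossq_half.comp_sub_left π).symm
  rw [sub_zero, show π - π/2 = π/2 by ring] at h
  have e : (fun x => Real.log (Real.cos (π - x) ^ 2))
      = fun x => Real.log (Real.cos x ^ 2) := by
    funext x; rw [Real.cos_pi_sub, neg_sq]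
  rwa [e] at h

lemma II_main (β : ℝ) :
    IntervalIntegrable
      (fun θ => Real.log ((Real.sin β * Real.cos θ)^2 + (Real.cos β * Real.sin θ)^2))
      volume 0 π := by
  by_cases hs : Real.sin β = 0
  · have hc : Real.cos β ^ 2 = 1 := by
      have := Real.sin_sq_add_cos_sq β; rw [hs] at this; nlinarith
    have e : (fun θ => Real.log ((Real.sin β * Real.cos θ)^2 + (Real.cos β * Real.sin θ)^2))
        = fun θ => Real.log (Real.sin θ ^ 2) := by
      funext θ; rw [hs, mul_pow, mul_pow, hc]; ring_nf
    rw [e]; exact II_logsinsq_pi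
  by_cases hcb : Real.cos β = 0
  · have hc : Real.sin β ^ 2 = 1 := by
      have := Real.sin_sq_add_cos_sq β; rw [hcb] at this; nlinarith
    have e : (fun θ => Real.log ((Real.sin β * Real.cos θ)^2 + (Real.cos β * Real.sin θ)^2))
        = fun θ => Real.log (Real.cos θ ^ 2) := by
      funext θ; rw [hcb, mul_pow, mul_pow, hc]; ring_nf
    rw [e]; exact II_logcossq_pi
  · have hm0 : 0 < min (Real.sin β ^ 2) (Real.cos β ^ 2) :=
      lt_min (by positivity) (by positivity)
    apply ContinuousOn.intervalIntegrable
    apply ContinuousOn.log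
    · fun_prop
    · intro θ _
      have h1 : min (Real.sin β ^ 2) (Real.cos β ^ 2) ≤ Real.sin β ^ 2 := min_le_left _ _
      have h2 : min (Real.sin β ^ 2) (Real.cos β ^ 2) ≤ Real.cos β ^ 2 := min_le_right _ _
      have h3 := Real.sin_sq_add_cos_sq θ
      have : min (Real.sin β ^ 2) (Real.cos β ^ 2)
          ≤ (Real.sin β * Real.cos θ)^2 + (Real.cos β * Real.sin θ)^2 := by
        nlinarith [sq_nonneg (Real.cos θ), sq_nonneg (Real.sin θ)]
      exact (hm0.trans_le this).ne'

theorem integral_log_le (β : ℝ) :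
    ∫ θ in (0:ℝ)..π,
        Real.log ((Real.sin β * Real.cos θ)^2 + (Real.cos β * Real.sin θ)^2)
      ≤ -π * Real.log 2 := by
  have hpi := Real.pi_pos
  have hInt := II_main β
  have hgInt : IntervalIntegrable
      (fun θ => 2 * ((Real.sin β * Real.cos θ)^2 + (Real.cos β * Real.sin θ)^2)
        - 1 - Real.log 2) volume 0 π := by
    apply Continuous.intervalIntegrable; fun_prop
  have hnull : volume {θ : ℝ | Real.sin θ = 0 ∨ Real.cos θ = 0} = 0 := by
    apply Set.Countable.measure_zero
    rw [Set.setOf_or]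
    apply Set.Countable.union
    · refine Set.Countable.mono ?_ (Set.countable_range (fun n : ℤ => (n:ℝ) * π))
      intro θ hθ
      rcases Real.sin_eq_zero_iff.mp hθ with ⟨n, hn⟩
      exact ⟨n, hn⟩
    · refine Set.Countable.mono ?_
        (Set.countable_range (fun n : ℤ => (2 * (n:ℝ) + 1) * π / 2))
      intro θ hθ
      rcases Real.cos_eq_zero_iff.mp hθ with ⟨n, hn⟩
      exact ⟨n, hn.symm⟩
  have key : ∀ θ : ℝ, Real.sin θ ≠ 0 → Real.cos θ ≠ 0 →
      Real.log ((Real.sin β * Real.cos θ)^2 + (Real.cos β * Real.sin θ)^2)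
        ≤ 2 * ((Real.sin β * Real.cos θ)^2 + (Real.cos β * Real.sin θ)^2)
          - 1 - Real.log 2 := by
    intro θ h1 h2
    have hf : 0 < (Real.sin β * Real.cos θ)^2 + (Real.cos β * Real.sin θ)^2 := by
      have hor : Real.sin β * Real.cos θ ≠ 0 ∨ Real.cos β * Real.sin θ ≠ 0 := by
        by_contra hcon
        push_neg at hcon
        have e1 : Real.sin β = 0 := by
          rcases mul_eq_zero.mp hcon.1 with h | h
          · exact h
          · exact absurd h h2
        have e2 : Real.cos β = 0 := by
          rcases mul_eq_zero.mp hcon.2 with h | h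
          · exact h
          · exact absurd h h1
        have := Real.sin_sq_add_cos_sq β
        rw [e1, e2] at this; norm_num at this
      rcases hor with h | h
      · have h' : 0 < (Real.sin β * Real.cos θ)^2 :=
          lt_of_le_of_ne (sq_nonneg _) (Ne.symm (pow_ne_zero 2 h))
        nlinarith [sq_nonneg (Real.cos β * Real.sin θ)]
      · have h' : 0 < (Real.cos β * Real.sin θ)^2 :=
          lt_of_le_of_ne (sq_nonneg _) (Ne.symm (pow_ne_zero 2 h))
        nlinarith [sq_nonneg (Real.sin β * Real.cos θ)]
    have hlog := Real.log_le_sub_one_of_pos (mul_pos two_pos hf)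
    rw [Real.log_mul two_ne_zero hf.ne'] at hlog
    linarith
  have hae : (fun θ => Real.log ((Real.sin β * Real.cos θ)^2 + (Real.cos β * Real.sin θ)^2))
      ≤ᵐ[volume.restrict (Set.Icc 0 π)]
      (fun θ => 2 * ((Real.sin β * Real.cos θ)^2 + (Real.cos β * Real.sin θ)^2)
        - 1 - Real.log 2) := by
    apply ae_restrict_of_ae
    rw [MeasureTheory.ae_iff]
    apply measure_mono_null _ hnull
    intro θ hθ
    simp only [Set.mem_setOf_eq] at hθ ⊢
    by_contra hnot
    push_neg at hnot
    exact hθ (key θ hnot.1 hnot.2)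
  calc ∫ θ in (0:ℝ)..π,
        Real.log ((Real.sin β * Real.cos θ)^2 + (Real.cos β * Real.sin θ)^2)
      ≤ ∫ θ in (0:ℝ)..π,
        (2 * ((Real.sin β * Real.cos θ)^2 + (Real.cos β * Real.sin θ)^2)
          - 1 - Real.log 2) :=
      intervalIntegral.integral_mono_ae_restrict hpi.le hInt hgInt hae
    _ = -π * Real.log 2 := by
      have hc2 : ∫ θ in (0:ℝ)..π, Real.cos θ ^ 2 = π/2 := by
        rw [integral_cos_sq]; simp
      have hs2 : ∫ θ in (0:ℝ)..π, Real.sin θ ^ 2 = π/2 := by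
        rw [integral_sin_sq]; simp
      have e : (fun θ => 2 * ((Real.sin β * Real.cos θ)^2 + (Real.cos β * Real.sin θ)^2)
            - 1 - Real.log 2)
          = fun θ => (2 * Real.sin β ^ 2) * Real.cos θ ^ 2
              + ((2 * Real.cos β ^ 2) * Real.sin θ ^ 2 + (-1 - Real.log 2)) := by
        funext θ; ring
      rw [e, intervalIntegral.integral_add, intervalIntegral.integral_add,
        intervalIntegral.integral_const_mul, intervalIntegral.integral_const_mul,
        intervalIntegral.integral_const, hc2, hs2]
      · simp only [smul_eq_mul, sub_zero]
        linear_combination π * Real.sin_sq_add_cos_sq β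
      · apply Continuous.intervalIntegrable; fun_prop
      · apply Continuous.intervalIntegrable; fun_prop
      · apply Continuous.intervalIntegrable; fun_prop
      · apply Continuous.intervalIntegrable; fun_prop
end

section
/- If β is real and the integral over [0, π] of log((sin β · cos θ)² + (cos β · sin θ)²) dθ equals -π·log 2, then sin²β = cos²β, i.e., β = π/4 + (π/2)·k for some integer k. -/
open Real MeasureTheory Set

set_option maxHeartbeats 2000000 in
theorem integral_log_eq_iff (β : ℝ)
    (h : ∫ θ in (0:ℝ)..π,
        Real.log ((Real.sin β * Real.cos θ)^2 + (Real.cos β * Real.sin θ)^2)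
      = -π * Real.log 2) :
    (Real.sin β)^2 = (Real.cos β)^2 ∧ ∃ k : ℤ, β = π/4 + (π/2) * k := by
  have hpi := Real.pi_pos
  have hlog2 : (0:ℝ) < Real.log 2 := Real.log_pos (by norm_num)
  obtain ⟨s, hs_def⟩ : ∃ s, s = Real.sin β ^ 2 := ⟨_, rfl⟩
  obtain ⟨c, hc_def⟩ : ∃ c, c = Real.cos β ^ 2 := ⟨_, rfl⟩
  have hs0 : 0 ≤ s := hs_def ▸ sq_nonneg _
  have hc0 : 0 ≤ c := hc_def ▸ sq_nonneg _
  have hsum : s + c = 1 := by rw [hs_def, hc_def]; exact sin_sq_add_cos_sq β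
  obtain ⟨F, hF_def⟩ : ∃ F : ℝ → ℝ,
      F = fun θ => Real.log (s * Real.cos θ ^ 2 + c * Real.sin θ ^ 2) := ⟨_, rfl⟩
  have hF : ∫ θ in (0:ℝ)..π, F θ = -π * Real.log 2 := by
    rw [← h]
    apply intervalIntegral.integral_congr
    intro θ _
    simp only [hF_def, hs_def, hc_def]
    ring_nf
  -- main claim
  have hmain : s = c := by
    by_contra hne
    by_cases hInt : IntervalIntegrable F volume 0 π
    · -- split the integral
      have hsub1 : uIcc (0:ℝ) (π/2) ⊆ uIcc (0:ℝ) π := by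
        rw [uIcc_of_le (by linarith), uIcc_of_le (by linarith)]
        exact Icc_subset_Icc le_rfl (by linarith)
      have hsub2 : uIcc (π/2) π ⊆ uIcc (0:ℝ) π := by
        rw [uIcc_of_le (by linarith), uIcc_of_le (by linarith)]
        exact Icc_subset_Icc (by linarith) le_rfl
      have h2 : IntervalIntegrable F volume 0 (π/2) := hInt.mono_set hsub1
      have h3 : IntervalIntegrable F volume (π/2) π := hInt.mono_set hsub2
      have h4 : (∫ θ in (0:ℝ)..π/2, F θ) + ∫ θ in (π/2:ℝ)..π, F θ = -π * Real.log 2 := by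
        rw [intervalIntegral.integral_add_adjacent_intervals h2 h3]; exact hF
      have h5 : (∫ θ in (π/2:ℝ)..π, F θ) = ∫ u in (0:ℝ)..π/2, F (u + π/2) := by
        rw [intervalIntegral.integral_comp_add_right F (π/2)]
        norm_num
      have h6 : IntervalIntegrable (fun u => F (u + π/2)) volume 0 (π/2) := by
        have := h3.comp_add_right (π/2)
        have e1 : π/2 - π/2 = (0:ℝ) := by ring
        have e2 : π - π/2 = π/2 := by ring
        rwa [e1, e2] at this
      obtain ⟨G, hG_def⟩ : ∃ G : ℝ → ℝ, G = fun u => F u + F (u + π/2) := ⟨_, rfl⟩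
      have hGint : IntervalIntegrable G volume 0 (π/2) := by
        rw [hG_def]; exact h2.add h6
      have h7 : ∫ u in (0:ℝ)..π/2, G u = -π * Real.log 2 := by
        rw [hG_def, intervalIntegral.integral_add h2 h6, ← h5]
        exact h4
      obtain ⟨H, hH_def⟩ : ∃ H : ℝ → ℝ, H = fun u => -(2 * Real.log 2) - G u := ⟨_, rfl⟩
      have hHint : IntervalIntegrable H volume 0 (π/2) := by
        rw [hH_def]; exact (intervalIntegrable_const).sub hGint
      have h8 : ∫ u in (0:ℝ)..π/2, H u = 0 := by
        rw [hH_def, intervalIntegral.integral_sub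
            (intervalIntegrable_const) hGint,
          intervalIntegral.integral_const, h7, smul_eq_mul]
        ring
      -- pointwise facts on Ioo 0 (π/2)
      have hpt : ∀ u ∈ Ioo (0:ℝ) (π/2), 0 ≤ H u ∧ (u < π/4 → 0 < H u) := by
        intro u hu
        obtain ⟨hu1, hu2⟩ := hu
        have hsin : 0 < Real.sin u := Real.sin_pos_of_pos_of_lt_pi hu1 (by linarith)
        have hcos : 0 < Real.cos u := Real.cos_pos_of_mem_Ioo ⟨by linarith, hu2⟩
        have ht : Real.sin u ^ 2 + Real.cos u ^ 2 = 1 := sin_sq_add_cos_sq u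
        obtain ⟨x, hx_def⟩ : ∃ x, x = s * Real.cos u ^ 2 + c * Real.sin u ^ 2 := ⟨_, rfl⟩
        obtain ⟨y, hy_def⟩ : ∃ y, y = s * Real.sin u ^ 2 + c * Real.cos u ^ 2 := ⟨_, rfl⟩
        have hxysum : x + y = 1 := by
          rw [hx_def, hy_def]; linear_combination (s + c) * ht + hsum
        have hsorc : 0 < s ∨ 0 < c := by
          rcases eq_or_lt_of_le hs0 with h' | h'
          · right; linarith
          · left; exact h'
        have hsin2 : 0 < Real.sin u ^ 2 := pow_pos hsin 2
        have hcos2 : 0 < Real.cos u ^ 2 := pow_pos hcos 2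
        have hx : 0 < x := by
          rw [hx_def]
          rcases hsorc with h' | h'
          · have := mul_pos h' hcos2
            nlinarith [mul_nonneg hc0 hsin2.le]
          · have := mul_pos h' hsin2
            nlinarith [mul_nonneg hs0 hcos2.le]
        have hy : 0 < y := by
          rw [hy_def]
          rcases hsorc with h' | h'
          · have := mul_pos h' hsin2
            nlinarith [mul_nonneg hc0 hcos2.le]
          · have := mul_pos h' hcos2
            nlinarith [mul_nonneg hs0 hsin2.le]
        have hxyle : x * y ≤ 1/4 := by nlinarith [sq_nonneg (x - y)]
        have hHu : H u = Real.log (1/4) - Real.log (x * y) := by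
          have hlog14 : Real.log (1/4 : ℝ) = -(2 * Real.log 2) := by
            rw [show (1/4 : ℝ) = ((2:ℝ)^2)⁻¹ by norm_num, Real.log_inv, Real.log_pow]
            push_cast; ring
          have hyF : Real.log (s * Real.cos (u + π/2) ^ 2 + c * Real.sin (u + π/2) ^ 2)
              = Real.log y := by
            rw [Real.cos_add_pi_div_two, Real.sin_add_pi_div_two, hy_def]
            ring_nf
          rw [hH_def, hG_def, hF_def]
          simp only
          rw [hyF, ← hx_def, ← Real.log_mul hx.ne' hy.ne', hlog14]
        constructor
        · rw [hHu]
          have : Real.log (x * y) ≤ Real.log (1/4) := by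
            rcases eq_or_lt_of_le hxyle with he | hlt
            · rw [he]
            · exact (Real.log_lt_log (mul_pos hx hy) hlt).le
          linarith
        · intro hu4
          have hcs : Real.sin u < Real.cos u := by
            have : Real.sin u < Real.sin (π/2 - u) := by
              apply Real.strictMonoOn_sin ⟨by linarith, by linarith⟩ ⟨by linarith, by linarith⟩
              linarith
            rwa [Real.sin_pi_div_two_sub] at this
          have hdiff : x - y = (s - c) * (Real.cos u ^ 2 - Real.sin u ^ 2) := by
            rw [hx_def, hy_def]; ring
          have hxyne : x ≠ y := by
            intro heq
            have h0 : (s - c) * (Real.cos u ^ 2 - Real.sin u ^ 2) = 0 := by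
              rw [← hdiff, heq, sub_self]
            rcases mul_eq_zero.mp h0 with h' | h'
            · exact hne (by linarith)
            · nlinarith
          have hxylt : x * y < 1/4 := by
            have h0 : x - y ≠ 0 := sub_ne_zero.mpr hxyne
            have : 0 < (x - y)^2 := lt_of_le_of_ne (sq_nonneg _) (Ne.symm (pow_ne_zero 2 h0))
            nlinarith
          rw [hHu]
          have := Real.log_lt_log (mul_pos hx hy) hxylt
          linarith
      -- integral positivity
      have hae : 0 ≤ᵐ[volume.restrict (Ioo (0:ℝ) (π/2))] H := by
        filter_upwards [MeasureTheory.ae_restrict_mem measurableSet_Ioo] with u hu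
        exact (hpt u hu).1
      have hHon : IntegrableOn H (Ioo (0:ℝ) (π/2)) volume :=
        (hHint.1).mono_set Ioo_subset_Ioc_self
      have hpos : 0 < ∫ u in Ioo (0:ℝ) (π/2), H u := by
        rw [MeasureTheory.setIntegral_pos_iff_support_of_nonneg_ae hae hHon]
        have hsub : Ioo (0:ℝ) (π/4) ⊆ Function.support H ∩ Ioo (0:ℝ) (π/2) := by
          intro u hu
          have hu' : u ∈ Ioo (0:ℝ) (π/2) := ⟨hu.1, by linarith [hu.2]⟩
          exact ⟨((hpt u hu').2 hu.2).ne', hu'⟩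
        calc (0:ENNReal) < volume (Ioo (0:ℝ) (π/4)) := by
              rw [Real.volume_Ioo]
              simp only [ENNReal.ofReal_pos]
              linarith
          _ ≤ _ := measure_mono hsub
      have heq : ∫ u in Ioo (0:ℝ) (π/2), H u = ∫ u in (0:ℝ)..π/2, H u := by
        rw [intervalIntegral.integral_of_le (by linarith : (0:ℝ) ≤ π/2),
          MeasureTheory.integral_Ioc_eq_integral_Ioo]
      rw [heq, h8] at hpos
      exact lt_irrefl 0 hpos
    · rw [intervalIntegral.integral_undef hInt] at hF
      nlinarith
  constructor
  · rw [hs_def, hc_def] at hmain; exact hmain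
  have hcos2 : Real.cos (2 * β) = 0 := by
    rw [Real.cos_two_mul]
    have hc12 : c = 1/2 := by rw [← hmain] at hsum ⊢; linarith
    rw [hc_def] at hc12
    linarith
  rcases Real.cos_eq_zero_iff.mp hcos2 with ⟨k, hk⟩
  exact ⟨k, by linarith [hk]⟩
end

section
/- For any complex numbers γ, δ with |γ|² + |δ|² = 1, the integral over [0, π] of log(|δ·cos θ − γ·sin θ|⁻²) dθ is at least π·log 2. -/
open Real

lemma logsin_int_half : IntervalIntegrable (fun x => Real.log (Real.sin x ^ 2))
    MeasureTheory.volume 0 (π / 2) := by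
  have hmaj : IntervalIntegrable (fun x : ℝ => 2 * Real.log (π / 2) + 4 * x ^ (-(1/2) : ℝ))
      MeasureTheory.volume 0 (π / 2) :=
    intervalIntegrable_const.add ((intervalIntegral.intervalIntegrable_rpow'
      (by norm_num)).const_mul 4)
  apply hmaj.mono_fun
  · exact (Real.measurable_log.comp ((Real.measurable_sin.pow_const 2))).aestronglyMeasurable
  · rw [Set.uIoc_of_le (by positivity : (0:ℝ) ≤ π / 2)]
    refine (MeasureTheory.ae_restrict_iff' measurableSet_Ioc).2 (Filter.Eventually.of_forall ?_)
    intro x hx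
    obtain ⟨hx0, hxh⟩ := hx
    have hπ := Real.pi_pos
    have hs : 2 / π * x ≤ Real.sin x := Real.mul_le_sin hx0.le hxh
    have hprod : 0 < 2 / π * x := by positivity
    have hspos : 0 < Real.sin x := lt_of_lt_of_le hprod hs
    have hs1 : Real.sin x ≤ 1 := Real.sin_le_one x
    have hlog1 : Real.log (Real.sin x ^ 2) = 2 * Real.log (Real.sin x) := by
      rw [Real.log_pow]; norm_num
    have hlogle : Real.log (Real.sin x) ≤ 0 := Real.log_nonpos hspos.le hs1
    have h2 : Real.log (2 / π * x) ≤ Real.log (Real.sin x) := Real.log_le_log hprod hs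
    have h3 : Real.log (2 / π * x) = Real.log x - Real.log (π / 2) := by
      rw [Real.log_mul (by positivity) (ne_of_gt hx0), Real.log_div (by norm_num) (ne_of_gt hπ),
        Real.log_div (ne_of_gt hπ) (by norm_num)]
      ring
    -- -log x ≤ 2 * x ^ (-(1/2))
    have hrp : (0:ℝ) < x ^ (-(1/2) : ℝ) := Real.rpow_pos_of_pos hx0 _
    have h4 : Real.log (x ^ (-(1/2) : ℝ)) ≤ x ^ (-(1/2) : ℝ) - 1 :=
      Real.log_le_sub_one_of_pos hrp
    have h5 : Real.log (x ^ (-(1/2) : ℝ)) = -(1/2) * Real.log x := Real.log_rpow hx0 _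
    have h6 : -Real.log x ≤ 2 * x ^ (-(1/2) : ℝ) := by nlinarith
    have hlogpi : 0 ≤ Real.log (π / 2) := Real.log_nonneg (by nlinarith [Real.pi_gt_three])
    have hnormL : ‖Real.log (Real.sin x ^ 2)‖ = -(2 * Real.log (Real.sin x)) := by
      rw [hlog1, Real.norm_eq_abs, abs_of_nonpos (by linarith)]
    show ‖Real.log (Real.sin x ^ 2)‖ ≤ ‖2 * Real.log (π / 2) + 4 * x ^ (-(1/2) : ℝ)‖
    rw [hnormL, Real.norm_eq_abs, abs_of_nonneg (by positivity)]
    nlinarith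
lemma logsin_int_pi : IntervalIntegrable (fun x => Real.log (Real.sin x ^ 2))
    MeasureTheory.volume 0 π := by
  have h2 := logsin_int_half.comp_sub_left π
  simp only [Real.sin_pi_sub, sub_zero, sub_self] at h2
  -- h2 : IntervalIntegrable _ volume π (π - π/2)
  have : π - π / 2 = π / 2 := by ring
  rw [this] at h2
  exact logsin_int_half.trans h2.symm

lemma logsin_int_full : IntervalIntegrable (fun x => Real.log (Real.sin x ^ 2))
    MeasureTheory.volume (-π) π := by
  have h2 := (IntervalIntegrable.iff_comp_neg (by simp [ENNReal.mul_eq_top])).mp logsin_int_pi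
  simp only [Real.sin_neg, neg_sq, neg_zero] at h2
  exact h2.symm.trans logsin_int_pi

lemma logsin_int_shift {θ₀ : ℝ} (h0 : 0 ≤ θ₀) (h1 : θ₀ ≤ π) :
    IntervalIntegrable (fun θ => Real.log (Real.sin (θ₀ - θ) ^ 2))
      MeasureTheory.volume 0 π := by
  have hπ := Real.pi_pos
  have hsub : IntervalIntegrable (fun x => Real.log (Real.sin x ^ 2))
      MeasureTheory.volume (θ₀ - π) θ₀ := by
    apply logsin_int_full.mono_set
    rw [Set.uIcc_of_le (by linarith), Set.uIcc_of_le (by linarith)]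
    exact Set.Icc_subset_Icc (by linarith) h1
  have h2 := hsub.comp_sub_left θ₀
  simp only [sub_sub_cancel, sub_self] at h2
  exact h2.symm

theorem integral_log_inv_sq_ge (γ δ : ℂ)
    (h : ‖γ‖ ^ 2 + ‖δ‖ ^ 2 = 1) :
    π * Real.log 2 ≤
      ∫ θ in (0:ℝ)..π,
        Real.log ((‖δ * Real.cos θ - γ * Real.sin θ‖ ^ 2)⁻¹) := by
  have hπ := Real.pi_pos
  set f : ℝ → ℝ := fun θ => ‖δ * Real.cos θ - γ * Real.sin θ‖ ^ 2 with hf_def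
  have hn : Complex.normSq γ + Complex.normSq δ = 1 := by
    rw [← Complex.sq_norm, ← Complex.sq_norm]; linarith
  have hfeq : ∀ θ : ℝ, f θ = Complex.normSq δ * Real.cos θ ^ 2
      + Complex.normSq γ * Real.sin θ ^ 2
      - (2 * (δ.re * γ.re + δ.im * γ.im)) * (Real.sin θ * Real.cos θ) := by
    intro θ
    rw [hf_def]
    simp only [Complex.sq_norm, Complex.normSq_apply, Complex.sub_re, Complex.sub_im,
      Complex.mul_re, Complex.mul_im, Complex.ofReal_re, Complex.ofReal_im]
    ring
  have hfc : Continuous f := by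
    apply Continuous.pow
    exact continuous_norm.comp (by continuity)
  -- integral of f
  have hif : (∫ θ in (0:ℝ)..π, f θ) = π / 2 := by
    have i1 : (∫ θ in (0:ℝ)..π, Real.cos θ ^ 2) = π / 2 := by
      rw [integral_cos_sq]; simp
    have i2 : (∫ θ in (0:ℝ)..π, Real.sin θ ^ 2) = π / 2 := by
      rw [integral_sin_sq]; simp
    have i3 : (∫ θ in (0:ℝ)..π, Real.sin θ * Real.cos θ) = 0 := by
      rw [integral_sin_mul_cos₁]; simp
    have hcos2 : IntervalIntegrable (fun θ => Complex.normSq δ * Real.cos θ ^ 2)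
        MeasureTheory.volume 0 π :=
      (continuous_const.mul (Real.continuous_cos.pow 2)).intervalIntegrable _ _
    have hsin2 : IntervalIntegrable (fun θ => Complex.normSq γ * Real.sin θ ^ 2)
        MeasureTheory.volume 0 π :=
      (continuous_const.mul (Real.continuous_sin.pow 2)).intervalIntegrable _ _
    have hsc : IntervalIntegrable
        (fun θ => (2 * (δ.re * γ.re + δ.im * γ.im)) * (Real.sin θ * Real.cos θ))
        MeasureTheory.volume 0 π :=
      (continuous_const.mul (Real.continuous_sin.mul Real.continuous_cos)).intervalIntegrable _ _
    calc (∫ θ in (0:ℝ)..π, f θ)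
        = ∫ θ in (0:ℝ)..π, (Complex.normSq δ * Real.cos θ ^ 2
            + Complex.normSq γ * Real.sin θ ^ 2
            - (2 * (δ.re * γ.re + δ.im * γ.im)) * (Real.sin θ * Real.cos θ)) := by
          exact intervalIntegral.integral_congr (fun θ _ => hfeq θ)
      _ = π / 2 := by
          rw [intervalIntegral.integral_sub (hcos2.add hsin2) hsc,
            intervalIntegral.integral_add hcos2 hsin2,
            intervalIntegral.integral_const_mul, intervalIntegral.integral_const_mul,
            intervalIntegral.integral_const_mul, i1, i2, i3]
          linear_combination (π / 2) * hn
  -- pointwise bound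
  have hpt : ∀ θ : ℝ, f θ ≠ 0 → Real.log 2 + 1 - 2 * f θ ≤ Real.log (f θ)⁻¹ := by
    intro θ hθ
    have hpos : 0 < f θ := lt_of_le_of_ne (by positivity) (Ne.symm hθ)
    have h1 : Real.log (2 * f θ) ≤ 2 * f θ - 1 :=
      Real.log_le_sub_one_of_pos (by positivity)
    rw [Real.log_mul (by norm_num) hθ] at h1
    rw [Real.log_inv]
    linarith
  -- main case split
  have hmain : IntervalIntegrable (fun θ => Real.log (f θ)⁻¹) MeasureTheory.volume 0 π ∧
      (∀ᵐ θ ∂(MeasureTheory.volume.restrict (Set.Icc (0:ℝ) π)), f θ ≠ 0) := by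
    by_cases hz : ∃ θ₀ ∈ Set.Icc (0:ℝ) π, δ * Real.cos θ₀ - γ * Real.sin θ₀ = 0
    · obtain ⟨θ₀, hθ₀, heq⟩ := hz
      set c : ℂ := γ * Real.cos θ₀ + δ * Real.sin θ₀ with hc_def
      have hcs : (Real.cos θ₀ : ℂ) ^ 2 + (Real.sin θ₀ : ℂ) ^ 2 = 1 := by
        have := Real.cos_sq_add_sin_sq θ₀
        exact_mod_cast this
      have hγ : γ = c * Real.cos θ₀ := by
        rw [hc_def]; linear_combination (-γ) * hcs - (Real.sin θ₀ : ℂ) * heq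
      have hδ : δ = c * Real.sin θ₀ := by
        rw [hc_def]; linear_combination (-δ) * hcs + (Real.cos θ₀ : ℂ) * heq
      have habs : ‖c‖ = 1 := by
        have h1 : ‖γ‖ ^ 2 = ‖c‖ ^ 2 * Real.cos θ₀ ^ 2 := by
          rw [hγ, norm_mul, Complex.norm_real, Real.norm_eq_abs, mul_pow, sq_abs]
        have h2 : ‖δ‖ ^ 2 = ‖c‖ ^ 2 * Real.sin θ₀ ^ 2 := by
          rw [hδ, norm_mul, Complex.norm_real, Real.norm_eq_abs, mul_pow, sq_abs]
        have h3 : ‖c‖ ^ 2 = 1 := by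
          have := Real.cos_sq_add_sin_sq θ₀
          nlinarith
        nlinarith [norm_nonneg c]
      have hfsin : ∀ θ : ℝ, f θ = Real.sin (θ₀ - θ) ^ 2 := by
        intro θ
        have hgθ : δ * Real.cos θ - γ * Real.sin θ = c * (Real.sin (θ₀ - θ) : ℂ) := by
          rw [hγ, hδ, Real.sin_sub]
          push_cast
          ring
        rw [hf_def]
        simp only [hgθ, norm_mul, habs, Complex.norm_real, Real.norm_eq_abs, one_mul, sq_abs]
      constructor
      · have hInt := logsin_int_shift hθ₀.1 hθ₀.2
        have : (fun θ => Real.log (f θ)⁻¹)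
            = fun θ => -Real.log (Real.sin (θ₀ - θ) ^ 2) := by
          funext θ; rw [hfsin θ, Real.log_inv]
        rw [this]
        exact hInt.neg
      · -- a.e. nonvanishing
        have hz : {θ : ℝ | f θ = 0} ⊆ Set.range (fun n : ℤ => θ₀ - n * π) := by
          intro θ hθ
          simp only [Set.mem_setOf_eq, hfsin θ, pow_eq_zero_iff] at hθ
          rcases Real.sin_eq_zero_iff.mp (by simpa using hθ) with ⟨n, hn⟩
          exact ⟨n, show θ₀ - (n : ℝ) * π = θ by linarith⟩
        have hmeas : MeasureTheory.volume {θ : ℝ | f θ = 0} = 0 :=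
          MeasureTheory.measure_mono_null hz (Set.Countable.measure_zero
            (Set.countable_range _) _)
        have : ∀ᵐ θ ∂(MeasureTheory.volume), f θ ≠ 0 := by
          rw [MeasureTheory.ae_iff]
          simpa using hmeas
        exact MeasureTheory.ae_restrict_of_ae this
    · push_neg at hz
      have hne : ∀ θ ∈ Set.Icc (0:ℝ) π, f θ ≠ 0 := by
        intro θ hθ
        rw [hf_def]
        exact pow_ne_zero _ (norm_ne_zero_iff.mpr (hz θ hθ))
      constructor
      · apply ContinuousOn.intervalIntegrable
        rw [Set.uIcc_of_le hπ.le]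
        apply ContinuousOn.log
        · exact (hfc.continuousOn.inv₀ hne)
        · exact fun θ hθ => inv_ne_zero (hne θ hθ)
      · exact (MeasureTheory.ae_restrict_mem measurableSet_Icc).mono hne
  obtain ⟨hInt, hae⟩ := hmain
  have hG : IntervalIntegrable (fun θ => Real.log 2 + 1 - 2 * f θ) MeasureTheory.volume 0 π :=
    (continuous_const.sub (continuous_const.mul hfc)).intervalIntegrable _ _
  have hmono := intervalIntegral.integral_mono_ae_restrict hπ.le hG hInt
    (hae.mono fun θ hθ => hpt θ hθ)
  have hGval : (∫ θ in (0:ℝ)..π, (Real.log 2 + 1 - 2 * f θ)) = π * Real.log 2 := by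
    rw [intervalIntegral.integral_sub (g := fun θ => 2 * f θ) intervalIntegrable_const
        ((continuous_const.mul hfc).intervalIntegrable _ _),
      intervalIntegral.integral_const_mul, hif, intervalIntegral.integral_const]
    simp
    ring
  linarith [hmono, hGval.symm.le]
end

section
/- Let F(x,y) = ∏_{k=0}^{n−1} (δ_k x − γ_k y) be a binary form of degree n ≥ 1 with complex coefficients, all of whose roots are non-real (i.e., no root lies on ℝP¹). Then h_F^{2/n} · A_F ≥ 2π, where h_F = ∏_k √(|γ_k|² + |δ_k|²) and A_F = (1/2)∫_0^{2π} |F(cos θ, sin θ)|^{−2/n} dθ. -/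
open Real MeasureTheory

lemma aux_q_eq (γ δ : ℂ) (θ : ℝ) :
    ‖δ * Real.cos θ - γ * Real.sin θ‖ ^ 2
      = Complex.normSq δ * Real.cos θ ^ 2 + Complex.normSq γ * Real.sin θ ^ 2
        - 2 * (δ.re * γ.re + δ.im * γ.im) * (Real.sin θ * Real.cos θ) := by
  rw [Complex.sq_norm, Complex.normSq_apply, Complex.normSq_apply, Complex.normSq_apply]
  simp only [Complex.sub_re, Complex.sub_im, Complex.mul_re, Complex.mul_im,
    Complex.ofReal_re, Complex.ofReal_im]
  ring

lemma aux_pos {γ δ : ℂ} (h : (δ * (starRingEnd ℂ) γ).im ≠ 0) (θ : ℝ) :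
    0 < ‖δ * Real.cos θ - γ * Real.sin θ‖ := by
  rcases (norm_nonneg (_ : ℂ)).lt_or_eq with h' | h'
  · exact h'
  exfalso
  have hz : δ * (Real.cos θ : ℂ) - γ * (Real.sin θ : ℂ) = 0 := by
    have := h'.symm
    rwa [norm_eq_zero] at this
  have hre : δ.re * Real.cos θ - γ.re * Real.sin θ = 0 := by
    have := congrArg Complex.re hz
    simpa [Complex.sub_re, Complex.mul_re, -Complex.ofReal_cos, -Complex.ofReal_sin] using this
  have him : δ.im * Real.cos θ - γ.im * Real.sin θ = 0 := by
    have := congrArg Complex.im hz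
    simpa [Complex.sub_im, Complex.mul_im, -Complex.ofReal_cos, -Complex.ofReal_sin] using this
  apply h
  have himz : (δ * (starRingEnd ℂ) γ).im = δ.im * γ.re - δ.re * γ.im := by
    simp [Complex.mul_im]; ring
  rw [himz]
  have h1 : (δ.im * γ.re - δ.re * γ.im) * Real.cos θ = 0 := by
    linear_combination γ.re * him - γ.im * hre
  have h2 : (δ.im * γ.re - δ.re * γ.im) * Real.sin θ = 0 := by
    linear_combination δ.re * him - δ.im * hre
  have hp := Real.sin_sq_add_cos_sq θ
  linear_combination Real.sin θ * h2 + Real.cos θ * h1 - (δ.im * γ.re - δ.re * γ.im) * hp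

lemma aux_le (γ δ : ℂ) (θ : ℝ) :
    ‖δ * Real.cos θ - γ * Real.sin θ‖ ^ 2
      ≤ ‖γ‖ ^ 2 + ‖δ‖ ^ 2 := by
  rw [aux_q_eq]
  simp only [Complex.sq_norm, Complex.normSq_apply]
  nlinarith [sq_nonneg (δ.re * Real.sin θ + γ.re * Real.cos θ),
    sq_nonneg (δ.im * Real.sin θ + γ.im * Real.cos θ), Real.sin_sq_add_cos_sq θ,
    sq_nonneg (Real.sin θ), sq_nonneg (Real.cos θ)]

lemma aux_integral (γ δ : ℂ) :
    ∫ θ in Set.Ioc (0:ℝ) (2*π), ‖δ * Real.cos θ - γ * Real.sin θ‖ ^ 2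
      = π * (‖γ‖ ^ 2 + ‖δ‖ ^ 2) := by
  rw [← intervalIntegral.integral_of_le (by positivity : (0:ℝ) ≤ 2*π)]
  have h1 : ∫ x in (0:ℝ)..(2*π), Real.cos x ^ 2 = π := by
    rw [integral_cos_sq]; simp [Real.sin_two_pi, Real.cos_two_pi]
  have h2 : ∫ x in (0:ℝ)..(2*π), Real.sin x ^ 2 = π := by
    rw [integral_sin_sq]; simp [Real.sin_two_pi, Real.cos_two_pi]
  have h3 : ∫ x in (0:ℝ)..(2*π), Real.sin x * Real.cos x = 0 := by
    rw [integral_sin_mul_cos₁]; simp [Real.sin_two_pi]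
  have heq : ∀ θ : ℝ, ‖δ * Real.cos θ - γ * Real.sin θ‖ ^ 2
      = Complex.normSq δ * Real.cos θ ^ 2 + Complex.normSq γ * Real.sin θ ^ 2
        - 2 * (δ.re * γ.re + δ.im * γ.im) * (Real.sin θ * Real.cos θ) := fun θ => aux_q_eq γ δ θ
  rw [intervalIntegral.integral_congr (fun θ _ => heq θ)]
  have ic : IntervalIntegrable (fun x : ℝ => Complex.normSq δ * Real.cos x ^ 2) volume 0 (2*π) :=
    ((by continuity : Continuous _).intervalIntegrable 0 (2*π))
  have is : IntervalIntegrable (fun x : ℝ => Complex.normSq γ * Real.sin x ^ 2) volume 0 (2*π) :=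
    ((by continuity : Continuous _).intervalIntegrable 0 (2*π))
  have isc : IntervalIntegrable
      (fun x : ℝ => 2 * (δ.re * γ.re + δ.im * γ.im) * (Real.sin x * Real.cos x)) volume 0 (2*π) :=
    ((by continuity : Continuous _).intervalIntegrable 0 (2*π))
  rw [intervalIntegral.integral_sub (ic.add is) isc, intervalIntegral.integral_add ic is,
    intervalIntegral.integral_const_mul, intervalIntegral.integral_const_mul,
    intervalIntegral.integral_const_mul, h1, h2, h3, Complex.sq_norm, Complex.sq_norm]
  ring
set_option maxHeartbeats 1000000 in
theorem lower_bound_no_real_roots (n : ℕ) (hn : 1 ≤ n) (γ δ : Fin n → ℂ)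
    (hnz : ∀ k, γ k ≠ 0 ∨ δ k ≠ 0)
    (hnoreal : ∀ k, (δ k * (starRingEnd ℂ) (γ k)).im ≠ 0) :
    ENNReal.ofReal
        ((∏ k, Real.sqrt (‖γ k‖ ^ 2 + ‖δ k‖ ^ 2))
          ^ ((2 : ℝ) / n)) *
      ((1 / 2) * ∫⁻ θ in Set.Ioc (0 : ℝ) (2 * π),
        ENNReal.ofReal
          (‖∏ k, (δ k * Real.cos θ - γ k * Real.sin θ)‖
            ^ (-(2 / (n : ℝ)))))
    ≥ ENNReal.ofReal (2 * π) := by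
  have hπ : 0 < π := Real.pi_pos
  have hnR : (0:ℝ) < n := by exact_mod_cast hn
  haveI : Nonempty (Fin n) := ⟨⟨0, hn⟩⟩
  set q : Fin n → ℝ → ℝ := fun k θ => ‖δ k * Real.cos θ - γ k * Real.sin θ‖ ^ 2
    with hqdef
  set h2 : Fin n → ℝ := fun k => ‖γ k‖ ^ 2 + ‖δ k‖ ^ 2 with hh2def
  have hh2pos : ∀ k, 0 < h2 k := by
    intro k
    rcases hnz k with h | h
    · exact add_pos_of_pos_of_nonneg (pow_pos (norm_pos_iff.mpr h) 2) (sq_nonneg _)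
    · exact add_pos_of_nonneg_of_pos (sq_nonneg _) (pow_pos (norm_pos_iff.mpr h) 2)
  have hapos : ∀ (k) (θ : ℝ), 0 < ‖δ k * Real.cos θ - γ k * Real.sin θ‖ :=
    fun k θ => aux_pos (hnoreal k) θ
  have hqpos : ∀ (k) (θ : ℝ), 0 < q k θ := fun k θ => pow_pos (hapos k θ) 2
  have hqle : ∀ (k) (θ : ℝ), q k θ ≤ h2 k := fun k θ => aux_le (γ k) (δ k) θ
  have hqcont : ∀ k, Continuous (q k) := by
    intro k
    apply Continuous.pow
    exact continuous_norm.comp (by continuity)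
  set f : ℝ → ℝ := fun θ => ∑ k, (1 / (n:ℝ)) * (q k θ / h2 k) with hfdef
  have hfpos : ∀ θ, 0 < f θ := by
    intro θ
    apply Finset.sum_pos _ Finset.univ_nonempty
    intro k _
    exact mul_pos (by positivity) (div_pos (hqpos k θ) (hh2pos k))
  have hfcont : Continuous f := by
    apply continuous_finset_sum
    intro k _
    exact continuous_const.mul ((hqcont k).div_const _)
  -- integral of f
  have hIf : ∫ θ in Set.Ioc (0:ℝ) (2*π), f θ = π := by
    rw [hfdef]
    rw [MeasureTheory.integral_finset_sum]
    · have hterm : ∀ k : Fin n,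
          ∫ θ in Set.Ioc (0:ℝ) (2*π), (1 / (n:ℝ)) * (q k θ / h2 k) = π / n := by
        intro k
        rw [MeasureTheory.integral_const_mul, MeasureTheory.integral_div]
        simp only [hqdef]
        rw [aux_integral (γ k) (δ k)]
        simp only [hh2def]
        field_simp [(hh2pos k).ne']; exact div_self (hh2pos k).ne'
      simp only [hterm]
      rw [Finset.sum_const, Finset.card_univ, Fintype.card_fin, nsmul_eq_mul]
      field_simp
    · intro k _
      exact ((continuous_const.mul ((hqcont k).div_const _)).integrableOn_Ioc)
  -- lintegral of G
  set G : ℝ → ENNReal := fun θ => ENNReal.ofReal (f θ) with hGdef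
  have hGmeas : Measurable G := ENNReal.measurable_ofReal.comp hfcont.measurable
  have hG0 : ∀ θ, G θ ≠ 0 := fun θ => by
    simp only [hGdef, ne_eq, ENNReal.ofReal_eq_zero, not_le]; exact hfpos θ
  have hGtop : ∀ θ, G θ ≠ ⊤ := fun θ => ENNReal.ofReal_ne_top
  have hGlint : ∫⁻ θ in Set.Ioc (0:ℝ) (2*π), G θ = ENNReal.ofReal π := by
    rw [hGdef, ← MeasureTheory.ofReal_integral_eq_lintegral_ofReal
      (hfcont.integrableOn_Ioc) (Filter.Eventually.of_forall fun θ => (hfpos θ).le), hIf]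
  -- Cauchy-Schwarz
  set K := ∫⁻ θ in Set.Ioc (0:ℝ) (2*π), (G θ)⁻¹ with hKdef
  have hCS : ENNReal.ofReal (2*π) ≤ ENNReal.ofReal π ^ ((1:ℝ)/2) * K ^ ((1:ℝ)/2) := by
    have hpq : Real.HolderConjugate 2 2 := Real.HolderConjugate.two_two
    have h := ENNReal.lintegral_mul_le_Lp_mul_Lq
      (MeasureTheory.volume.restrict (Set.Ioc (0:ℝ) (2*π))) hpq
      (f := fun θ => G θ ^ ((1:ℝ)/2)) (g := fun θ => (G θ)⁻¹ ^ ((1:ℝ)/2))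
      (hGmeas.pow_const _).aemeasurable (hGmeas.inv.pow_const _).aemeasurable
    have hone : ∀ θ, G θ ^ ((1:ℝ)/2) * (G θ)⁻¹ ^ ((1:ℝ)/2) = 1 := by
      intro θ
      rw [← ENNReal.mul_rpow_of_ne_top (hGtop θ) (by simp [hG0 θ]),
        ENNReal.mul_inv_cancel (hG0 θ) (hGtop θ), ENNReal.one_rpow]
    have htwo : ∀ x : ENNReal, (x ^ ((1:ℝ)/2)) ^ (2:ℝ) = x := by
      intro x
      rw [← ENNReal.rpow_mul]
      norm_num
    simp only [Pi.mul_apply, hone, htwo] at h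
    rw [MeasureTheory.lintegral_one, MeasureTheory.Measure.restrict_apply_univ,
      Real.volume_Ioc] at h
    calc ENNReal.ofReal (2*π) = ENNReal.ofReal (2*π - 0) := by norm_num
      _ ≤ _ := by
        refine le_trans h ?_
        apply le_of_eq
        rw [hGlint, hKdef]
  have hK4 : ENNReal.ofReal (4*π) ≤ K := by
    rcases eq_or_ne K ⊤ with hKtop | hKtop
    · simp [hKtop]
    have hsq := mul_le_mul' hCS hCS
    have hrhs : (ENNReal.ofReal π ^ ((1:ℝ)/2) * K ^ ((1:ℝ)/2))
        * (ENNReal.ofReal π ^ ((1:ℝ)/2) * K ^ ((1:ℝ)/2)) = ENNReal.ofReal π * K := by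
      rw [mul_mul_mul_comm, ← ENNReal.rpow_add_of_nonneg _ _ (by norm_num) (by norm_num),
        ← ENNReal.rpow_add_of_nonneg _ _ (by norm_num) (by norm_num)]
      norm_num
    rw [hrhs, ← ENNReal.ofReal_mul (by positivity)] at hsq
    have hL : (2*π) * (2*π) = (4*π) * π := by ring
    rw [hL, ENNReal.ofReal_mul (by positivity)] at hsq
    rw [← ENNReal.mul_le_mul_iff_left (c := ENNReal.ofReal π)
      (by simp [ENNReal.ofReal_eq_zero, not_le, hπ]) ENNReal.ofReal_ne_top]
    calc ENNReal.ofReal (4*π) * ENNReal.ofReal π ≤ ENNReal.ofReal π * K := hsq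
      _ = K * ENNReal.ofReal π := mul_comm _ _
  -- pointwise bound
  set c : ℝ := (∏ k, h2 k) ^ ((1:ℝ)/n) with hcdef
  have hprodh2 : 0 < ∏ k, h2 k := Finset.prod_pos fun k _ => hh2pos k
  have hc : 0 < c := Real.rpow_pos_of_pos hprodh2 _
  have hpoint : ∀ θ : ℝ, ENNReal.ofReal c⁻¹ * (G θ)⁻¹ ≤ ENNReal.ofReal
      (‖∏ k, (δ k * Real.cos θ - γ k * Real.sin θ)‖ ^ (-(2 / (n : ℝ)))) := by
    intro θ
    set a : Fin n → ℝ := fun k => ‖δ k * Real.cos θ - γ k * Real.sin θ‖ with hadef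
    have hA : ‖∏ k, (δ k * Real.cos θ - γ k * Real.sin θ)‖ = ∏ k, a k :=
      norm_prod _ _
    have hapos' : ∀ k, 0 < a k := fun k => hapos k θ
    have hprodapos : 0 < ∏ k, a k := Finset.prod_pos fun k _ => hapos' k
    have key : (∏ k, a k) ^ ((2:ℝ)/n) ≤ c * f θ := by
      have e1 : (∏ k, a k) ^ ((2:ℝ)/n) = ∏ k, (a k) ^ ((2:ℝ)/n) :=
        (Real.finset_prod_rpow Finset.univ a (fun i _ => (hapos' i).le) _).symm
      have e2 : ∀ k, a k ^ ((2:ℝ)/n)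
          = (h2 k) ^ ((1:ℝ)/n) * (q k θ / h2 k) ^ ((1:ℝ)/n) := by
        intro k
        have hq2 : a k ^ ((2:ℝ)/n) = (q k θ) ^ ((1:ℝ)/n) := by
          have : ((2:ℝ)/n) = (2:ℝ) * ((1:ℝ)/n) := by ring
          rw [this, Real.rpow_mul (hapos' k).le]
          congr 1
          rw [show ((2:ℝ)) = ((2:ℕ):ℝ) by norm_num, Real.rpow_natCast]
        rw [hq2, ← Real.mul_rpow (hh2pos k).le
          (div_nonneg (hqpos k θ).le (hh2pos k).le)]
        congr 1
        rw [mul_comm, div_mul_cancel₀ _ (hh2pos k).ne']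
      have e3 : ∏ k, ((h2 k) ^ ((1:ℝ)/n) * (q k θ / h2 k) ^ ((1:ℝ)/n))
          = (∏ k, (h2 k) ^ ((1:ℝ)/n)) * ∏ k, (q k θ / h2 k) ^ ((1:ℝ)/n) :=
        Finset.prod_mul_distrib
      have e4 : ∏ k, (h2 k) ^ ((1:ℝ)/n) = c :=
        Real.finset_prod_rpow Finset.univ h2 (fun i _ => (hh2pos i).le) _
      have e5 : ∏ k, (q k θ / h2 k) ^ ((1:ℝ)/n) ≤ f θ := by
        have := Real.geom_mean_le_arith_mean_weighted Finset.univ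
          (fun _ => (1:ℝ)/n) (fun k => q k θ / h2 k)
          (fun i _ => by positivity)
          (by rw [Finset.sum_const, Finset.card_univ, Fintype.card_fin, nsmul_eq_mul]
              field_simp)
          (fun i _ => (div_pos (hqpos i θ) (hh2pos i)).le)
        simpa [hfdef] using this
      calc (∏ k, a k) ^ ((2:ℝ)/n) = ∏ k, (a k) ^ ((2:ℝ)/n) := e1
        _ = ∏ k, ((h2 k) ^ ((1:ℝ)/n) * (q k θ / h2 k) ^ ((1:ℝ)/n)) :=
          Finset.prod_congr rfl fun k _ => e2 k
        _ = c * ∏ k, (q k θ / h2 k) ^ ((1:ℝ)/n) := by rw [e3, e4]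
        _ ≤ c * f θ := mul_le_mul_of_nonneg_left e5 hc.le
    have hreal : c⁻¹ * (f θ)⁻¹ ≤ (∏ k, a k) ^ (-(2/(n:ℝ))) := by
      rw [Real.rpow_neg hprodapos.le, ← mul_inv]
      exact inv_anti₀ (Real.rpow_pos_of_pos hprodapos _) key
    have hGinv : (G θ)⁻¹ = ENNReal.ofReal (f θ)⁻¹ := by
      rw [ENNReal.ofReal_inv_of_pos (hfpos θ)]
    calc ENNReal.ofReal c⁻¹ * (G θ)⁻¹
        = ENNReal.ofReal c⁻¹ * ENNReal.ofReal (f θ)⁻¹ := by rw [hGinv]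
      _ = ENNReal.ofReal (c⁻¹ * (f θ)⁻¹) := (ENNReal.ofReal_mul (inv_nonneg.mpr hc.le)).symm
      _ ≤ _ := by
          rw [hA]
          exact ENNReal.ofReal_le_ofReal hreal
  -- putting it together
  have hI : ENNReal.ofReal c⁻¹ * K ≤ ∫⁻ θ in Set.Ioc (0:ℝ) (2*π),
      ENNReal.ofReal
        (‖∏ k, (δ k * Real.cos θ - γ k * Real.sin θ)‖ ^ (-(2 / (n:ℝ)))) := by
    rw [hKdef, ← MeasureTheory.lintegral_const_mul _ (f := fun θ => (G θ)⁻¹) hGmeas.inv]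
    exact MeasureTheory.lintegral_mono fun θ => hpoint θ
  have hPc : ENNReal.ofReal
      ((∏ k, Real.sqrt (‖γ k‖ ^ 2 + ‖δ k‖ ^ 2)) ^ ((2:ℝ)/n))
      = ENNReal.ofReal c := by
    congr 1
    have hs : ∏ k, Real.sqrt (‖γ k‖ ^ 2 + ‖δ k‖ ^ 2)
        = (∏ k, h2 k) ^ ((1:ℝ)/2) := by
      rw [← Real.finset_prod_rpow Finset.univ h2 (fun i _ => (hh2pos i).le)]
      exact Finset.prod_congr rfl fun k _ => Real.sqrt_eq_rpow _
    rw [hs, ← Real.rpow_mul hprodh2.le, hcdef]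
    congr 1
    ring
  rw [ge_iff_le, hPc]
  have hhalf : (1/2 : ENNReal) * ENNReal.ofReal (4*π) = ENNReal.ofReal (2*π) := by
    rw [show (1/2 : ENNReal) = ENNReal.ofReal (1/2) by
        rw [ENNReal.ofReal_div_of_pos (by norm_num)]; norm_num,
      ← ENNReal.ofReal_mul (by norm_num)]
    congr 1
    ring
  have hcc : ENNReal.ofReal c * ENNReal.ofReal c⁻¹ = 1 := by
    rw [← ENNReal.ofReal_mul hc.le, mul_inv_cancel₀ hc.ne']
    exact ENNReal.ofReal_one
  calc ENNReal.ofReal (2*π)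
      = ENNReal.ofReal c * (ENNReal.ofReal c⁻¹ * ((1/2 : ENNReal) * ENNReal.ofReal (4*π))) := by
        rw [hhalf, ← mul_assoc, hcc, one_mul]
    _ ≤ ENNReal.ofReal c * (ENNReal.ofReal c⁻¹ * ((1/2 : ENNReal) * K)) := by
        exact mul_le_mul_right (mul_le_mul_right (mul_le_mul_right hK4 _) _) _
    _ = ENNReal.ofReal c * ((1/2 : ENNReal) * (ENNReal.ofReal c⁻¹ * K)) := by
        rw [mul_left_comm (ENNReal.ofReal c⁻¹)]
    _ ≤ _ := by
        apply mul_le_mul_right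
        exact mul_le_mul_right hI _
end
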